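/- Let f : F_{2^n} → F_{2^n} be an APN map. Then M_1(f) + M_2(f) ≥ 1; that is, there exists at least one element of F_{2^n} with exactly one or exactly two preimages under f. -/

import Mathlib

open Finset
open scoped Classical

/-- Number of preimages of `y` under `f`. -/
noncomputable def preCard {F : Type*} [Fintype F] (f : F → F) (y : F) : ℕ :=
  (Finset.univ.filter fun x => f x = y).card

/-- `M_r(f)`: the number of elements with exactly `r` preimages under `f`. -/
noncomputable def Mcount {F : Type*} [Fintype F] (f : F → F) (r : ℕ) : ℕ :=
  (Finset.univ.filter fun y => preCard f y = r).card

/-- `f` is almost perfect nonlinear: every equation `f (x+a) + f x = b` with `a ≠ 0`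
has at most two solutions. -/
def IsAPN {F : Type*} [Field F] [Fintype F] (f : F → F) : Prop :=
  ∀ a b : F, a ≠ 0 → (Finset.univ.filter fun x => f (x + a) + f x = b).card ≤ 2

/-- an APN map on `F_{2^n}` satisfies `M₁(f) + M₂(f) ≥ 1`: some element has
exactly one or exactly two preimages. -/
theorem apn_M1_add_M2_ge_one {F : Type*} [Field F] [Fintype F] [CharP F 2] {n : ℕ}
    (hn : 0 < n) (hcard : Fintype.card F = 2 ^ n) {f : F → F} (hf : IsAPN f) :
    1 ≤ Mcount f 1 + Mcount f 2 := by
  classical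
  set q := Fintype.card F with hq
  have hq1 : 1 ≤ q := Fintype.card_pos
  -- char two facts
  have key : ∀ u v : F, u + v = 0 ↔ u = v := by
    intro u v
    rw [CharTwo.add_eq_iff_eq_add, zero_add]
  have addadd : ∀ x a : F, x + a + a = x := by
    intro x a
    rw [add_assoc, CharTwo.add_self_eq_zero, add_zero]
  by_contra hcon
  push_neg at hcon
  have hM1 : Mcount f 1 = 0 := by omega
  have hM2 : Mcount f 2 = 0 := by omega
  rw [Mcount, Finset.card_eq_zero, Finset.filter_eq_empty_iff] at hM1 hM2
  have hpre : ∀ y : F, preCard f y ≠ 1 ∧ preCard f y ≠ 2 :=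
    fun y => ⟨hM1 (mem_univ y), hM2 (mem_univ y)⟩
  -- the pair set
  set P : Finset (F × F) := Finset.univ.filter fun p => f p.1 = f p.2 ∧ p.1 ≠ p.2 with hP
  -- count P fiberwise over f p.1
  have hPcard : P.card = ∑ y : F, (preCard f y * preCard f y - preCard f y) := by
    rw [Finset.card_eq_sum_card_fiberwise (f := fun p => f p.1) (t := Finset.univ)
      (fun p _ => mem_univ _)]
    refine Finset.sum_congr rfl fun y _ => ?_
    have : P.filter (fun p => f p.1 = y) =
        (Finset.univ.filter fun x => f x = y).offDiag := by
      ext ⟨a, b⟩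
      simp only [hP, Finset.mem_filter, Finset.mem_univ, true_and, Finset.mem_offDiag]
      constructor
      · rintro ⟨⟨h1, h2⟩, h3⟩
        exact ⟨h3, h1 ▸ h3, h2⟩
      · rintro ⟨h1, h2, h3⟩
        exact ⟨⟨h1.trans h2.symm, h3⟩, h1⟩
    rw [this, Finset.offDiag_card]
    rfl
  -- lower bound for P.card
  have hlow : 2 * q ≤ P.card := by
    have hsum : ∑ y : F, preCard f y = q := by
      rw [hq, ← Finset.card_univ,
        Finset.card_eq_sum_card_fiberwise (f := f) (t := Finset.univ) (fun x _ => mem_univ _)]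
      rfl
    rw [hPcard, ← hsum, Finset.mul_sum]
    refine Finset.sum_le_sum fun y _ => ?_
    obtain ⟨h1, h2⟩ := hpre y
    rcases Nat.eq_zero_or_pos (preCard f y) with h | h
    · simp [h]
    · have h3 : 3 ≤ preCard f y := by omega
      have : 3 * preCard f y ≤ preCard f y * preCard f y :=
        Nat.mul_le_mul_right _ h3
      omega
  -- the APN pair set
  set S : Finset (F × F) :=
    Finset.univ.filter (fun p => p.2 ≠ 0 ∧ f (p.1 + p.2) + f p.1 = 0) with hS
  -- P and S have the same cardinality via (x, a) ↦ (x, x + a)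
  have hPS : P.card = S.card := by
    apply Finset.card_bij (fun p _ => (p.1, p.1 + p.2))
    · rintro ⟨x, y⟩ hp
      simp only [hP, Finset.mem_filter, Finset.mem_univ, true_and] at hp
      simp only [hS, Finset.mem_filter, Finset.mem_univ, true_and]
      have hxy : x + (x + y) = y := by rw [← add_assoc, CharTwo.add_self_eq_zero, zero_add]
      refine ⟨fun h0 => hp.2 ((key x y).mp h0), ?_⟩
      rw [hxy, key]
      exact hp.1.symm
    · rintro ⟨x, y⟩ hp ⟨x', y'⟩ hp' h
      simp only [Prod.mk.injEq] at h
      obtain ⟨h1, h2⟩ := h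
      subst h1
      have h3 := add_left_cancel h2
      simp [h3]
    · rintro ⟨x, a⟩ hp
      simp only [hS, Finset.mem_filter, Finset.mem_univ, true_and] at hp
      have hxa : x + (x + a) = a := by rw [← add_assoc, CharTwo.add_self_eq_zero, zero_add]
      refine ⟨(x, x + a), ?_, ?_⟩
      · simp only [hP, Finset.mem_filter, Finset.mem_univ, true_and]
        refine ⟨((key _ _).mp hp.2).symm, fun h => hp.1 ?_⟩
        have h' := hxa
        rw [← h, CharTwo.add_self_eq_zero] at h'
        exact h'.symm
      · simp [hxa]
  -- upper bound for S.card via APN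
  have hup : S.card ≤ 2 * (q - 1) := by
    have hfib : S.card = ∑ a : F, (S.filter fun p => p.2 = a).card :=
      Finset.card_eq_sum_card_fiberwise (s := S) (f := fun p : F × F => p.2) (t := Finset.univ)
        (fun p _ => mem_univ _)
    have hbound : ∀ a : F, (S.filter fun p => p.2 = a).card ≤ if a = 0 then 0 else 2 := by
      intro a
      by_cases ha : a = 0
      · subst ha
        simp only [eq_self_iff_true, if_true, Nat.le_zero, Finset.card_eq_zero]
        rw [Finset.filter_eq_empty_iff]
        rintro ⟨x, b⟩ hp hb
        simp only [hS, Finset.mem_filter, Finset.mem_univ, true_and] at hp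
        exact hp.1 hb
      · rw [if_neg ha]
        calc (S.filter fun p => p.2 = a).card
            ≤ ((Finset.univ.filter fun x => f (x + a) + f x = 0).image fun x => (x, a)).card := by
              apply Finset.card_le_card
              rintro ⟨x, b⟩ hp
              simp only [hS, Finset.mem_filter, Finset.mem_univ, true_and] at hp
              obtain ⟨⟨-, h2⟩, h3⟩ := hp
              subst h3
              apply Finset.mem_image_of_mem
              simp only [Finset.mem_filter, Finset.mem_univ, true_and]
              exact h2
          _ ≤ (Finset.univ.filter fun x => f (x + a) + f x = 0).card :=
              Finset.card_image_le
          _ ≤ 2 := hf a 0 ha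
    calc S.card ≤ ∑ a : F, (if a = 0 then 0 else 2) := by
          rw [hfib]; exact Finset.sum_le_sum fun a _ => hbound a
      _ = 2 * (q - 1) := by
          rw [Finset.sum_ite]
          simp only [Finset.sum_const_zero, zero_add, Finset.sum_const, smul_eq_mul]
          have he : (Finset.univ.filter fun a : F => ¬ a = 0) = Finset.univ.erase 0 := by
            ext a
            simp [Finset.mem_erase, and_comm]
          rw [he, Finset.card_erase_of_mem (Finset.mem_univ 0), Finset.card_univ, mul_comm]
  omega
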